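/- Let k be a positive integer and x, y real numbers with |x| < 1 and |kxy| < 1. Then Σ_{n=1}^∞ n · L_k(y:n) · x^n/(1 − x^n) = kyx/(1 − kyx), where the series on the left converges absolutely. -/

import Mathlib

open scoped BigOperators

/-- `L_k(y : n) = (1/n) * ∑_{d ∣ n} μ(n/d) k^d y^d`. -/
noncomputable def Lk (k : ℕ) (y : ℝ) (n : ℕ) : ℝ :=
  (1 / (n : ℝ)) *
    ∑ d ∈ n.divisors, ((ArithmeticFunction.moebius (n / d) : ℤ) : ℝ) * (k : ℝ) ^ d * y ^ d

set_option maxHeartbeats 1000000 in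
theorem stmt15 (k : ℕ) (hk : 0 < k) (x y : ℝ) (hx : |x| < 1)
    (hxy : |(k : ℝ) * x * y| < 1) :
    Summable (fun n : ℕ =>
      |((n + 1 : ℕ) : ℝ) * Lk k y (n + 1) * (x ^ (n + 1) / (1 - x ^ (n + 1)))|) ∧
    ∑' n : ℕ, ((n + 1 : ℕ) : ℝ) * Lk k y (n + 1) * (x ^ (n + 1) / (1 - x ^ (n + 1)))
      = (k : ℝ) * y * x / (1 - (k : ℝ) * y * x) := by
  classical
  set c : ℝ := (k : ℝ) * y with hc
  set a : ℕ → ℝ := fun n =>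
    ∑ d ∈ n.divisors, ((ArithmeticFunction.moebius (n / d) : ℤ) : ℝ) * c ^ d with ha
  have hcx : |c * x| < 1 := by
    have h : c * x = (k : ℝ) * x * y := by rw [hc]; ring
    rw [h]; exact hxy
  -- n * Lk = a n for n ≥ 1
  have hLk : ∀ n : ℕ, 0 < n → (n : ℝ) * Lk k y n = a n := by
    intro n hn
    have hn' : (n : ℝ) ≠ 0 := Nat.cast_ne_zero.mpr hn.ne'
    simp only [Lk, ha]
    rw [← mul_assoc, mul_one_div, div_self hn', one_mul]
    refine Finset.sum_congr rfl fun d _ => ?_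
    rw [mul_assoc, ← mul_pow]
  -- Möbius inversion
  have hmob : ∀ m : ℕ, 0 < m → ∑ d ∈ m.divisors, a d = c ^ m := by
    refine ArithmeticFunction.sum_eq_iff_sum_smul_moebius_eq.mpr ?_
    intro n hn
    simp only [ha]
    rw [← Nat.sum_divisorsAntidiagonal'
      (f := fun d e => ((ArithmeticFunction.moebius d : ℤ) : ℝ) * c ^ e)]
    refine Finset.sum_congr rfl fun p _ => ?_
    rw [zsmul_eq_mul]
  set r : ℝ := max |x| |c * x| with hrdef
  have hr0 : 0 ≤ r := le_trans (abs_nonneg x) (le_max_left _ _)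
  have hr1 : r < 1 := max_lt hx hcx
  have hxr : |x| ≤ r := le_max_left _ _
  have hcxr : |c * x| ≤ r := le_max_right _ _
  -- the key bound
  have key : ∀ n N : ℕ, 0 < n → n ∣ N → 0 < N → |a n * x ^ N| ≤ (n : ℝ) * r ^ N := by
    intro n N hn hdvd hN
    have hnN : n ≤ N := Nat.le_of_dvd hN hdvd
    rw [ha, Finset.sum_mul]
    calc |∑ d ∈ n.divisors, ((ArithmeticFunction.moebius (n / d) : ℤ) : ℝ) * c ^ d * x ^ N|
        ≤ ∑ d ∈ n.divisors,
          |((ArithmeticFunction.moebius (n / d) : ℤ) : ℝ) * c ^ d * x ^ N| :=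
          Finset.abs_sum_le_sum_abs _ _
      _ ≤ ∑ _d ∈ n.divisors, r ^ N := by
          refine Finset.sum_le_sum fun d hd => ?_
          have hdn : d ∣ n := (Nat.mem_divisors.mp hd).1
          have hdN : d ≤ N := le_trans (Nat.le_of_dvd hn hdn) hnN
          have h1 : |((ArithmeticFunction.moebius (n / d) : ℤ) : ℝ)| ≤ 1 := by
            rw [← Int.cast_abs]
            exact_mod_cast ArithmeticFunction.abs_moebius_le_one
          rw [abs_mul, abs_mul]
          calc |((ArithmeticFunction.moebius (n / d) : ℤ) : ℝ)| * |c ^ d| * |x ^ N|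
              ≤ 1 * |c ^ d| * |x ^ N| := by
                have h2 := abs_nonneg (c ^ d); have h3 := abs_nonneg (x ^ N); gcongr
            _ = |c * x| ^ d * |x| ^ (N - d) := by
                rw [one_mul, abs_mul, abs_pow, abs_pow, mul_pow, mul_assoc,
                  ← pow_add, Nat.add_sub_cancel' hdN]
            _ ≤ r ^ d * r ^ (N - d) := by gcongr <;> exact abs_nonneg _
            _ = r ^ N := by rw [← pow_add, Nat.add_sub_cancel' hdN]
      _ = (n.divisors.card : ℝ) * r ^ N := by rw [Finset.sum_const, nsmul_eq_mul]
      _ ≤ (n : ℝ) * r ^ N := by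
          have hcard : n.divisors.card ≤ n := by
            have hsub : n.divisors ⊆ Finset.Icc 1 n := by
              intro d hd
              rw [Finset.mem_Icc]
              exact ⟨Nat.pos_of_mem_divisors hd,
                Nat.le_of_dvd hn (Nat.mem_divisors.mp hd).1⟩
            calc n.divisors.card ≤ (Finset.Icc 1 n).card := Finset.card_le_card hsub
              _ = n := by rw [Nat.card_Icc]; omega
          have : (n.divisors.card : ℝ) ≤ (n : ℝ) := Nat.cast_le.mpr hcard
          have hrN : (0:ℝ) ≤ r ^ N := pow_nonneg hr0 N
          nlinarith
  set F : ℕ × ℕ → ℝ := fun p => a (p.1 + 1) * x ^ ((p.1 + 1) * (p.2 + 1)) with hF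
  have hbound : ∀ p : ℕ × ℕ, |F p| ≤ ((p.1 + 1 : ℕ) : ℝ) * r ^ ((p.1 + 1) * (p.2 + 1)) := by
    intro p
    exact key (p.1 + 1) ((p.1 + 1) * (p.2 + 1)) (Nat.succ_pos _) ⟨p.2 + 1, rfl⟩
      (Nat.mul_pos (Nat.succ_pos _) (Nat.succ_pos _))
  have hmaj : Summable fun p : ℕ × ℕ => ((p.1 + 1 : ℕ) : ℝ) * r ^ ((p.1 + 1) * (p.2 + 1)) := by
    have hs1 : Summable fun i : ℕ => ((i + 1 : ℕ) : ℝ) * r ^ (i + 1) := by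
      have h1 : Summable fun i : ℕ => (i : ℝ) * r ^ i := by
        simpa using summable_pow_mul_geometric_of_norm_lt_one 1
          (r := r) (by rwa [Real.norm_eq_abs, abs_of_nonneg hr0])
      have h2 : Summable fun i : ℕ => r ^ i :=
        summable_geometric_of_lt_one hr0 hr1
      have h3 := (h1.add h2).mul_right r
      refine h3.congr fun i => ?_
      push_cast
      ring
    have hs2 : Summable fun j : ℕ => r ^ j := summable_geometric_of_lt_one hr0 hr1
    have hprod : Summable fun p : ℕ × ℕ => (((p.1 + 1 : ℕ) : ℝ) * r ^ (p.1 + 1)) * r ^ p.2 :=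
      summable_mul_of_summable_norm hs1.norm hs2.norm
    refine Summable.of_nonneg_of_le (fun p => by positivity) (fun p => ?_) hprod
    have hexp : (p.1 + 1) + p.2 ≤ (p.1 + 1) * (p.2 + 1) := by nlinarith [p.1.zero_le, p.2.zero_le]
    calc ((p.1 + 1 : ℕ) : ℝ) * r ^ ((p.1 + 1) * (p.2 + 1))
        ≤ ((p.1 + 1 : ℕ) : ℝ) * r ^ ((p.1 + 1) + p.2) :=
          mul_le_mul_of_nonneg_left (pow_le_pow_of_le_one hr0 hr1.le hexp)
            (Nat.cast_nonneg _)
      _ = (((p.1 + 1 : ℕ) : ℝ) * r ^ (p.1 + 1)) * r ^ p.2 := by rw [pow_add]; ring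
  have hFabs : Summable fun p : ℕ × ℕ => |F p| :=
    Summable.of_nonneg_of_le (fun p => abs_nonneg _) hbound hmaj
  have hFsummable : Summable F := by rwa [summable_abs_iff] at hFabs
  -- inner geometric sums
  have hinner : ∀ i : ℕ,
      HasSum (fun j => F (i, j)) (a (i + 1) * (x ^ (i + 1) / (1 - x ^ (i + 1)))) := by
    intro i
    have hw : ‖x ^ (i + 1)‖ < 1 := by
      rw [Real.norm_eq_abs, abs_pow]
      calc |x| ^ (i + 1) ≤ |x| ^ 1 :=
            pow_le_pow_of_le_one (abs_nonneg x) hx.le (Nat.succ_le_succ (Nat.zero_le _))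
        _ = |x| := pow_one _
        _ < 1 := hx
    have hgeo := (hasSum_geometric_of_norm_lt_one hw).mul_left (a (i + 1) * x ^ (i + 1))
    have heq : (fun j : ℕ => a (i + 1) * x ^ (i + 1) * (x ^ (i + 1)) ^ j)
        = fun j : ℕ => F (i, j) := by
      funext j
      show a (i + 1) * x ^ (i + 1) * (x ^ (i + 1)) ^ j
        = a (i + 1) * x ^ ((i + 1) * (j + 1))
      rw [pow_mul, pow_succ]
      ring
    rw [heq] at hgeo
    have : a (i + 1) * (x ^ (i + 1) / (1 - x ^ (i + 1)))
        = a (i + 1) * x ^ (i + 1) * (1 - x ^ (i + 1))⁻¹ := by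
      rw [div_eq_mul_inv]; ring
    rw [this]
    exact hgeo
  -- the terms of the series in the statement
  have hterm : ∀ n : ℕ, ((n + 1 : ℕ) : ℝ) * Lk k y (n + 1) * (x ^ (n + 1) / (1 - x ^ (n + 1)))
      = a (n + 1) * (x ^ (n + 1) / (1 - x ^ (n + 1))) := by
    intro n
    rw [hLk (n + 1) (Nat.succ_pos n)]
  -- inner abs sums, for summability claim
  have hinnerAbs : ∀ i : ℕ, Summable fun j : ℕ => |F (i, j)| := by
    intro i
    exact hFabs.prod_factor i
  have houter : Summable fun i : ℕ => ∑' j : ℕ, |F (i, j)| := by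
    have := (hFabs.hasSum.prod_fiberwise fun i => (hinnerAbs i).hasSum).summable
    exact this
  have hsummable : Summable (fun n : ℕ =>
      |((n + 1 : ℕ) : ℝ) * Lk k y (n + 1) * (x ^ (n + 1) / (1 - x ^ (n + 1)))|) := by
    refine Summable.of_nonneg_of_le (fun n => abs_nonneg _) (fun n => ?_) houter
    rw [hterm n, ← (hinner n).tsum_eq]
    have h := norm_tsum_le_tsum_norm (f := fun j : ℕ => F (n, j))
      (by simpa [Real.norm_eq_abs] using hinnerAbs n)
    simpa [Real.norm_eq_abs] using h
  refine ⟨hsummable, ?_⟩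
  -- sum of the series = tsum F
  have hLHS : (∑' n : ℕ, ((n + 1 : ℕ) : ℝ) * Lk k y (n + 1) * (x ^ (n + 1) / (1 - x ^ (n + 1))))
      = ∑' p : ℕ × ℕ, F p := by
    rw [Summable.tsum_prod hFsummable]
    refine tsum_congr fun n => ?_
    rw [hterm n, ← (hinner n).tsum_eq]
  rw [hLHS]
  -- tsum F via fibers of φ (i,j) ↦ (i+1)(j+1)
  set φ : ℕ × ℕ → ℕ := fun p => (p.1 + 1) * (p.2 + 1) with hφ
  have hfib := hFsummable.hasSum.tsum_fiberwise φ
  -- fiber sums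
  have hfiber0 : (∑' q : φ ⁻¹' {0}, F q) = 0 := by
    have : IsEmpty (φ ⁻¹' {0} : Set (ℕ × ℕ)) := by
      constructor
      rintro ⟨⟨i, j⟩, hq⟩
      simp only [hφ, Set.mem_preimage, Set.mem_singleton_iff, Nat.mul_eq_zero] at hq
      omega
    exact tsum_empty
  have hfiberS : ∀ m : ℕ, 0 < m → (∑' q : φ ⁻¹' {m}, F q) = (c * x) ^ m := by
    intro m hm
    set T : Finset (ℕ × ℕ) :=
      m.divisorsAntidiagonal.image fun q => (q.1 - 1, q.2 - 1) with hT
    have hset : φ ⁻¹' {m} = (T : Set (ℕ × ℕ)) := by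
      ext ⟨i, j⟩
      simp only [hφ, Set.mem_preimage, Set.mem_singleton_iff, hT, Finset.coe_image,
        Set.mem_image, Finset.mem_coe, Nat.mem_divisorsAntidiagonal]
      constructor
      · intro h
        exact ⟨(i + 1, j + 1), ⟨h, hm.ne'⟩, by simp⟩
      · rintro ⟨⟨d, e⟩, ⟨hde, -⟩, heq⟩
        have hd : 0 < d := by
          rcases Nat.eq_zero_or_pos d with h0 | h0
          · subst h0; rw [zero_mul] at hde; omega
          · exact h0
        have he : 0 < e := by
          rcases Nat.eq_zero_or_pos e with h0 | h0
          · subst h0; rw [mul_zero] at hde; omega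
          · exact h0
        simp only [Prod.mk.injEq] at heq
        obtain ⟨rfl, rfl⟩ := heq
        have hd1 : d - 1 + 1 = d := by omega
        have he1 : e - 1 + 1 = e := by omega
        rw [hd1, he1]
        exact hde
    rw [hset, Finset.tsum_subtype']
    rw [hT, Finset.sum_image ?hinj]
    case hinj =>
      rintro ⟨d, e⟩ hde ⟨d', e'⟩ hde' heq
      have hd := Nat.ne_zero_of_mem_divisorsAntidiagonal hde
      have hd' := Nat.ne_zero_of_mem_divisorsAntidiagonal hde'
      simp only [Prod.mk.injEq] at heq ⊢
      omega
    have hstep : ∀ q ∈ m.divisorsAntidiagonal, F (q.1 - 1, q.2 - 1) = a q.1 * x ^ m := by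
      rintro ⟨d, e⟩ hde
      obtain ⟨hd, he⟩ := Nat.ne_zero_of_mem_divisorsAntidiagonal hde
      have hprod : d * e = m := (Nat.mem_divisorsAntidiagonal.mp hde).1
      show a (d - 1 + 1) * x ^ ((d - 1 + 1) * (e - 1 + 1)) = a d * x ^ m
      have hd1 : d - 1 + 1 = d := by omega
      have he1 : e - 1 + 1 = e := by omega
      rw [hd1, he1, hprod]
    rw [Finset.sum_congr rfl hstep, ← Finset.sum_mul]
    rw [Nat.sum_divisorsAntidiagonal (f := fun d _ => a d)]
    rw [hmob m hm, ← mul_pow]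
  -- assemble
  have hg : (fun m : ℕ => ∑' q : φ ⁻¹' {m}, F q)
      = fun m : ℕ => (c * x) ^ m - (if m = 0 then 1 else 0) := by
    funext m
    rcases Nat.eq_zero_or_pos m with rfl | hm
    · simp [hfiber0]
    · rw [hfiberS m hm, if_neg hm.ne']
      ring
  rw [hg] at hfib
  have h1w : (1 : ℝ) - c * x ≠ 0 := by
    have := abs_lt.mp hcx
    intro h; linarith [this.2]
  have hgeo2 : HasSum (fun m : ℕ => (c * x) ^ m) (1 - c * x)⁻¹ :=
    hasSum_geometric_of_norm_lt_one (by rwa [Real.norm_eq_abs])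
  have hind : HasSum (fun m : ℕ => if m = 0 then (1 : ℝ) else 0) 1 := hasSum_ite_eq 0 1
  have hval : (∑' p : ℕ × ℕ, F p) = (1 - c * x)⁻¹ - 1 := hfib.unique (hgeo2.sub hind)
  rw [hval]
  field_simp
  ring
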